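/- Let σ ≥ 1 be a real number. There exists a constant C > 0 such that for every function a : ℤ³ → [0,∞), ∑_{n∈ℤ³} ⟨n⟩^{2(σ−1)} ((a⋆a⋆a)(n))² ≤ C (∑_{n∈ℤ³} ⟨n⟩^{2σ} a(n)²) · (∑_{n∈ℤ³} ⟨n⟩² a(n)²)², where (a⋆a⋆a)(n) = ∑_{(m,k)∈ℤ³×ℤ³} a(m)·a(k)·a(n−m−k) and all sums are taken in [0,∞]. -/

import Mathlib

open scoped ENNReal NNReal BigOperators

noncomputable section

/-- The square of the Euclidean norm of a lattice point `n ∈ ℤ³`, as a real number. -/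
def nsqR (n : Fin 3 → ℤ) : ℝ := ∑ i, ((n i : ℝ))^2





lemma two_mul_le_sq_add_sq (u v : ℝ≥0∞) : 2 * (u * v) ≤ u^2 + v^2 := by
  rcases le_total u v with h | h
  · obtain ⟨d, rfl⟩ : ∃ d, v = u + d := ⟨v - u, (add_tsub_cancel_of_le h).symm⟩
    calc 2 * (u * (u + d)) = u^2 + (u^2 + 2*(u*d)) := by ring
    _ ≤ u^2 + (u + d)^2 := by
        gcongr
        calc u^2 + 2*(u*d) ≤ u^2 + 2*(u*d) + d^2 := le_self_add
        _ = (u+d)^2 := by ring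
  · obtain ⟨d, rfl⟩ : ∃ d, u = v + d := ⟨u - v, (add_tsub_cancel_of_le h).symm⟩
    calc 2 * ((v + d) * v) = v^2 + (v^2 + 2*(v*d)) := by ring
    _ ≤ (v + d)^2 + v^2 := by
        rw [add_comm]
        gcongr
        calc v^2 + 2*(v*d) ≤ v^2 + 2*(v*d) + d^2 := le_self_add
        _ = (v+d)^2 := by ring

/-- Cauchy–Schwarz for ENNReal tsums, squared form. -/
lemma enn_cs_sq {ι : Type*} (p q : ι → ℝ≥0∞) :
    (∑' i, p i * q i)^2 ≤ (∑' i, (p i)^2) * (∑' i, (q i)^2) := by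
  have key : 2 * (∑' i, p i * q i)^2 ≤ 2 * ((∑' i, (p i)^2) * (∑' i, (q i)^2)) := by
    have e1 : (∑' i, p i * q i)^2 = ∑' i, ∑' j, (p i * q i) * (p j * q j) := by
      rw [sq]
      rw [← ENNReal.tsum_mul_right]
      exact tsum_congr fun i => (ENNReal.tsum_mul_left).symm
    have e2 : (∑' i, (p i)^2) * (∑' i, (q i)^2) = ∑' i, ∑' j, (p i)^2 * (q j)^2 := by
      rw [← ENNReal.tsum_mul_right]
      exact tsum_congr fun i => (ENNReal.tsum_mul_left).symm
    rw [e1, e2]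
    calc 2 * ∑' i, ∑' j, (p i * q i) * (p j * q j)
        = ∑' i, ∑' j, 2 * ((p i * q i) * (p j * q j)) := by
          rw [← ENNReal.tsum_mul_left]
          exact tsum_congr fun i => (ENNReal.tsum_mul_left).symm
      _ ≤ ∑' i, ∑' j, ((p i * q j)^2 + (p j * q i)^2) := by
          refine ENNReal.tsum_le_tsum fun i => ENNReal.tsum_le_tsum fun j => ?_
          calc 2 * ((p i * q i) * (p j * q j)) = 2 * ((p i * q j) * (p j * q i)) := by ring
          _ ≤ (p i * q j)^2 + (p j * q i)^2 := two_mul_le_sq_add_sq _ _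
      _ = ∑' i, ∑' j, ((p i)^2 * (q j)^2) + ∑' i, ∑' j, ((p j)^2 * (q i)^2) := by
          rw [← ENNReal.tsum_add]
          refine tsum_congr fun i => ?_
          rw [← ENNReal.tsum_add]
          refine tsum_congr fun j => ?_
          ring
      _ = 2 * ∑' i, ∑' j, (p i)^2 * (q j)^2 := by
          rw [two_mul]
          congr 1
          rw [ENNReal.tsum_comm]
  calc (∑' i, p i * q i)^2 = 2⁻¹ * (2 * (∑' i, p i * q i)^2) := by
        rw [← mul_assoc, ENNReal.inv_mul_cancel (by norm_num) (by norm_num), one_mul]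
    _ ≤ 2⁻¹ * (2 * ((∑' i, (p i)^2) * (∑' i, (q i)^2))) := by gcongr
    _ = (∑' i, (p i)^2) * (∑' i, (q i)^2) := by
        rw [← mul_assoc, ENNReal.inv_mul_cancel (by norm_num) (by norm_num), one_mul]

lemma enn_sqrt_sq (x : ℝ≥0∞) : (x^2) ^ ((2:ℝ)⁻¹) = x := by
  rw [← ENNReal.rpow_natCast x 2, ← ENNReal.rpow_mul]
  norm_num

lemma enn_sq_sqrt (x : ℝ≥0∞) : (x ^ ((2:ℝ)⁻¹))^2 = x := by
  rw [← ENNReal.rpow_natCast (x ^ _) 2, ← ENNReal.rpow_mul]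
  norm_num

/-- Cauchy–Schwarz for ENNReal tsums, sqrt form. -/
lemma enn_cs {ι : Type*} (p q : ι → ℝ≥0∞) :
    ∑' i, p i * q i ≤ (∑' i, (p i)^2) ^ ((2:ℝ)⁻¹) * (∑' i, (q i)^2) ^ ((2:ℝ)⁻¹) := by
  have := ENNReal.rpow_le_rpow (enn_cs_sq p q) (by norm_num : (0:ℝ) ≤ (2:ℝ)⁻¹)
  rwa [enn_sqrt_sq, ENNReal.mul_rpow_of_nonneg _ _ (by norm_num)] at this

/-- Minkowski-type inequality via Cauchy–Schwarz. -/
lemma enn_minkowski {ι κ : Type*} (F : ι → κ → ℝ≥0∞) :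
    ∑' n, (∑' J, F J n)^2 ≤ (∑' J, (∑' n, (F J n)^2) ^ ((2:ℝ)⁻¹))^2 := by
  calc ∑' n, (∑' J, F J n)^2
      = ∑' n, ∑' J, ∑' J', F J n * F J' n := by
        refine tsum_congr fun n => ?_
        rw [sq, ← ENNReal.tsum_mul_right]
        exact tsum_congr fun J => (ENNReal.tsum_mul_left).symm
    _ = ∑' J, ∑' J', ∑' n, F J n * F J' n := by
        rw [ENNReal.tsum_comm]
        exact tsum_congr fun J => ENNReal.tsum_comm
    _ ≤ ∑' J, ∑' J', (∑' n, (F J n)^2) ^ ((2:ℝ)⁻¹) * (∑' n, (F J' n)^2) ^ ((2:ℝ)⁻¹) := by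
        exact ENNReal.tsum_le_tsum fun J => ENNReal.tsum_le_tsum fun J' => enn_cs _ _
    _ = (∑' J, (∑' n, (F J n)^2) ^ ((2:ℝ)⁻¹))^2 := by
        rw [sq, ← ENNReal.tsum_mul_right]
        exact tsum_congr fun J => ENNReal.tsum_mul_left


/-- `⟨n⟩² = 1 + |n|²` as a natural number. -/
def nsN (n : Fin 3 → ℤ) : ℕ := 1 + ∑ i, (n i).natAbs^2

lemma nsN_pos (n : Fin 3 → ℤ) : 0 < nsN n := by unfold nsN; omega

lemma nsN_cast (n : Fin 3 → ℤ) : ((nsN n : ℝ)) = 1 + nsqR n := by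
  unfold nsN nsqR
  push_cast
  congr 1
  refine Finset.sum_congr rfl fun i _ => ?_
  rw [Nat.cast_natAbs]
  push_cast
  rw [sq_abs]

/-- dyadic level of a lattice point -/
def lev (n : Fin 3 → ℤ) : ℕ := Nat.log 2 (nsN n)

lemma lev_le (n : Fin 3 → ℤ) : 2^(lev n) ≤ nsN n :=
  Nat.pow_log_le_self 2 (nsN_pos n).ne'

lemma lt_lev (n : Fin 3 → ℤ) : nsN n < 2^(lev n + 1) :=
  Nat.lt_pow_succ_log_self (by norm_num) _

lemma ofReal_one_add_nsqR (n : Fin 3 → ℤ) :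
    ENNReal.ofReal (1 + nsqR n) = (nsN n : ℝ≥0∞) := by
  rw [← nsN_cast, ENNReal.ofReal_natCast]

lemma ofReal_rpow_nsqR (n : Fin 3 → ℤ) (s : ℝ) :
    ENNReal.ofReal ((1 + nsqR n) ^ s) = (nsN n : ℝ≥0∞) ^ s := by
  rw [← nsN_cast, ← ENNReal.ofReal_rpow_of_pos (by exact_mod_cast nsN_pos n),
    ENNReal.ofReal_natCast]

/-- Counting lattice points with `nsN n < 2^(i+1)`. -/
lemma count_shell (i : ℕ) :
    ∑' n : Fin 3 → ℤ, (if nsN n < 2^(i+1) then (1:ℝ≥0∞) else 0)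
      ≤ 512 * (2:ℝ≥0∞) ^ ((3 * i / 2 : ℝ)) := by
  set t : ℕ := 2^(i/2+1) with ht
  set box : Finset (Fin 3 → ℤ) := Finset.Icc (fun _ => -(t:ℤ)) (fun _ => (t:ℤ)) with hbox
  have hmem : ∀ n : Fin 3 → ℤ, nsN n < 2^(i+1) → n ∈ box := by
    intro n hn
    rw [hbox, Finset.mem_Icc]
    have hc : ∀ c, -(t:ℤ) ≤ n c ∧ n c ≤ t := by
      intro c
      have h1 : (n c).natAbs^2 < 2^(i+1) := by
        refine lt_of_le_of_lt ?_ hn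
        unfold nsN
        have : (n c).natAbs^2 ≤ ∑ j, (n j).natAbs^2 :=
          Finset.single_le_sum (f := fun j => (n j).natAbs^2)
            (fun j _ => Nat.zero_le _) (Finset.mem_univ c)
        omega
      have h2 : 2^(i+1) ≤ t^2 := by
        rw [ht, ← pow_mul]
        exact Nat.pow_le_pow_right (by norm_num) (by omega)
      have h3 : (n c).natAbs < t :=
        lt_of_pow_lt_pow_left₀ 2 (Nat.zero_le _) (lt_of_lt_of_le h1 h2)
      omega
    exact ⟨fun c => (hc c).1, fun c => (hc c).2⟩
  have hexp : ((2:ℝ≥0∞))^(3*(i/2)) ≤ (2:ℝ≥0∞) ^ ((3 * i / 2 : ℝ)) := by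
    calc ((2:ℝ≥0∞))^(3*(i/2)) = (2:ℝ≥0∞) ^ ((3*(i/2) : ℕ) : ℝ) := by
          rw [ENNReal.rpow_natCast]
      _ ≤ (2:ℝ≥0∞) ^ ((3 * i / 2 : ℝ)) := by
          apply ENNReal.rpow_le_rpow_of_exponent_le (by norm_num)
          push_cast
          have : ((i/2 : ℕ) : ℝ) ≤ (i : ℝ)/2 := by exact_mod_cast Nat.cast_div_le
          linarith
  have hcard : box.card = (2*t+1)^3 := by
    rw [hbox, Pi.card_Icc]
    have h4 : ((t:ℤ) + 1 + (t:ℤ)).toNat = 2*t+1 := by omega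
    simp [Int.card_Icc, h4]
  have hcard2 : (2*t+1)^3 ≤ 2^(3*(i/2)) * 512 := by
    have h1 : 2*t+1 ≤ 2^(i/2+3) := by
      have e1 : 2 * t = 2^(i/2+2) := by rw [ht]; ring
      have h5 : 1 ≤ 2^(i/2+2) := Nat.one_le_two_pow
      have e2 : 2^(i/2+2) + 2^(i/2+2) = 2^(i/2+3) := by ring
      omega
    calc (2*t+1)^3 ≤ (2^(i/2+3))^3 := Nat.pow_le_pow_left h1 3
    _ = 2^(3*(i/2)) * 512 := by
        rw [← pow_mul]
        have : (i/2+3)*3 = 3*(i/2) + 9 := by ring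
        rw [this, pow_add]
        norm_num
  calc ∑' n : Fin 3 → ℤ, (if nsN n < 2^(i+1) then (1:ℝ≥0∞) else 0)
      ≤ ∑' n : Fin 3 → ℤ, (if n ∈ box then (1:ℝ≥0∞) else 0) := by
        refine ENNReal.tsum_le_tsum fun n => ?_
        by_cases h : nsN n < 2^(i+1)
        · simp [h, hmem n h]
        · simp [h]
    _ = ∑ n ∈ box, (if n ∈ box then (1:ℝ≥0∞) else 0) := by
        refine tsum_eq_sum fun n hn => by simp [hn]
    _ = (box.card : ℝ≥0∞) := by
        rw [Finset.sum_ite_of_true (fun n hn => hn)]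
        simp
    _ ≤ ((2^(3*(i/2)) * 512 : ℕ) : ℝ≥0∞) := by
        have : box.card ≤ 2^(3*(i/2)) * 512 := hcard ▸ hcard2
        exact_mod_cast this
    _ ≤ 512 * (2:ℝ≥0∞) ^ ((3 * i / 2 : ℝ)) := by
        push_cast
        rw [mul_comm]
        exact mul_le_mul_right hexp 512



variable {G : Type*} [AddCommGroup G]

lemma tsum_shift (k : G) (f : G → ℝ≥0∞) : ∑' n, f (n - k) = ∑' n, f n :=
  (Equiv.subRight k).tsum_eq f

lemma tsum_reflect (k : G) (f : G → ℝ≥0∞) : ∑' n, f (k - n) = ∑' n, f n :=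
  (Equiv.subLeft k).tsum_eq f

/-- Young's inequality `‖φ⋆ψ⋆ψ‖₂² ≤ ‖φ‖₂² ‖ψ‖₁⁴`. -/
lemma young (φ ψ : G → ℝ≥0∞) :
    ∑' n : G, (∑' p : G × G, φ p.1 * ψ p.2 * ψ (n - p.1 - p.2))^2
      ≤ (∑' m, (φ m)^2) * (∑' k, ψ k)^4 := by
  set ρ : G → ℝ≥0∞ := fun n => ∑' k, ψ k * ψ (n - k) with hρ
  have hA : ∀ n : G, (∑' p : G × G, φ p.1 * ψ p.2 * ψ (n - p.1 - p.2))
      = ∑' m, φ m * ρ (n - m) := by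
    intro n
    rw [ENNReal.tsum_prod (f := fun m k => φ m * ψ k * ψ (n - m - k))]
    refine tsum_congr fun m => ?_
    rw [hρ]
    rw [← ENNReal.tsum_mul_left]
    exact tsum_congr fun k => by rw [mul_assoc]
  have hB : ∑' n, ρ n = (∑' k, ψ k)^2 := by
    rw [hρ]
    calc ∑' n, ∑' k, ψ k * ψ (n - k) = ∑' k, ∑' n, ψ k * ψ (n - k) := ENNReal.tsum_comm
    _ = ∑' k, ψ k * ∑' n, ψ (n - k) := tsum_congr fun k => ENNReal.tsum_mul_left
    _ = ∑' k, ψ k * ∑' n, ψ n := tsum_congr fun k => by rw [tsum_shift]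
    _ = (∑' k, ψ k)^2 := by rw [ENNReal.tsum_mul_right, sq]
  have hC : ∀ n : G, (∑' m, φ m * ρ (n - m))^2
      ≤ (∑' m, (φ m)^2 * ρ (n - m)) * ∑' n', ρ n' := by
    intro n
    have step : ∑' m, φ m * ρ (n - m)
        ≤ (∑' m, (φ m)^2 * ρ (n - m)) ^ ((2:ℝ)⁻¹) * (∑' m, ρ (n - m)) ^ ((2:ℝ)⁻¹) := by
      have := enn_cs (fun m => φ m * (ρ (n - m)) ^ ((2:ℝ)⁻¹))
        (fun m => (ρ (n - m)) ^ ((2:ℝ)⁻¹))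
      simp only [mul_pow, enn_sq_sqrt] at this
      calc ∑' m, φ m * ρ (n - m)
          = ∑' m, (φ m * (ρ (n - m)) ^ ((2:ℝ)⁻¹)) * (ρ (n - m)) ^ ((2:ℝ)⁻¹) := by
            refine tsum_congr fun m => ?_
            rw [mul_assoc, ← sq, enn_sq_sqrt]
        _ ≤ _ := this
    calc (∑' m, φ m * ρ (n - m))^2
        ≤ ((∑' m, (φ m)^2 * ρ (n - m)) ^ ((2:ℝ)⁻¹) * (∑' m, ρ (n - m)) ^ ((2:ℝ)⁻¹))^2 := by
          exact pow_le_pow_left' step 2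
      _ = (∑' m, (φ m)^2 * ρ (n - m)) * ∑' m, ρ (n - m) := by
          rw [mul_pow, enn_sq_sqrt, enn_sq_sqrt]
      _ = (∑' m, (φ m)^2 * ρ (n - m)) * ∑' n', ρ n' := by
          congr 1
          exact tsum_reflect n ρ
  calc ∑' n : G, (∑' p : G × G, φ p.1 * ψ p.2 * ψ (n - p.1 - p.2))^2
      = ∑' n, (∑' m, φ m * ρ (n - m))^2 := tsum_congr fun n => by rw [hA]
    _ ≤ ∑' n, (∑' m, (φ m)^2 * ρ (n - m)) * ∑' n', ρ n' :=
        ENNReal.tsum_le_tsum fun n => hC n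
    _ = (∑' n, ∑' m, (φ m)^2 * ρ (n - m)) * ∑' n', ρ n' := ENNReal.tsum_mul_right
    _ = ((∑' m, (φ m)^2) * ∑' n', ρ n') * ∑' n', ρ n' := by
        congr 1
        calc ∑' n, ∑' m, (φ m)^2 * ρ (n - m) = ∑' m, ∑' n, (φ m)^2 * ρ (n - m) :=
              ENNReal.tsum_comm
          _ = ∑' m, (φ m)^2 * ∑' n, ρ (n - m) := tsum_congr fun m => ENNReal.tsum_mul_left
          _ = ∑' m, (φ m)^2 * ∑' n', ρ n' := tsum_congr fun m => by rw [tsum_shift]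
          _ = (∑' m, (φ m)^2) * ∑' n', ρ n' := ENNReal.tsum_mul_right
    _ = (∑' m, (φ m)^2) * (∑' k, ψ k)^4 := by
        rw [hB]
        ring

abbrev G3 := Fin 3 → ℤ

/-- shell piece -/
def shl (f : G3 → ℝ≥0∞) (J : ℕ) (n : G3) : ℝ≥0∞ := if lev n = J then f n else 0
/-- low pass -/
def low (f : G3 → ℝ≥0∞) (J : ℕ) (n : G3) : ℝ≥0∞ := if lev n ≤ J then f n else 0
/-- dyadic trilinear piece -/
def Vp (f : G3 → ℝ≥0∞) (J : ℕ) (n : G3) : ℝ≥0∞ :=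
  ∑' p : G3 × G3, shl f J p.1 * low f J p.2 * low f J (n - p.1 - p.2)

lemma swap12 (A B C : G3 → ℝ≥0∞) (n : G3) :
    ∑' p : G3 × G3, A p.1 * B p.2 * C (n - p.1 - p.2)
      = ∑' p : G3 × G3, B p.1 * A p.2 * C (n - p.1 - p.2) := by
  rw [← (Equiv.prodComm G3 G3).tsum_eq (fun p => B p.1 * A p.2 * C (n - p.1 - p.2))]
  refine tsum_congr fun p => ?_
  simp only [Equiv.prodComm_apply, Prod.fst_swap, Prod.snd_swap]
  rw [sub_right_comm]
  ring

lemma swap13 (A B C : G3 → ℝ≥0∞) (n : G3) :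
    ∑' p : G3 × G3, A p.1 * B p.2 * C (n - p.1 - p.2)
      = ∑' p : G3 × G3, C p.1 * B p.2 * A (n - p.1 - p.2) := by
  have hinv : Function.Involutive (fun p : G3 × G3 => (n - p.1 - p.2, p.2)) := by
    intro p
    show (n - (n - p.1 - p.2) - p.2, p.2) = p
    have h1 : n - (n - p.1 - p.2) - p.2 = p.1 := by abel
    rw [h1]
  rw [← (hinv.toPerm _).tsum_eq (fun p => C p.1 * B p.2 * A (n - p.1 - p.2))]
  refine tsum_congr fun p => ?_
  simp only [Function.Involutive.coe_toPerm]
  have h1 : n - (n - p.1 - p.2) - p.2 = p.1 := by abel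
  rw [h1]
  ring

lemma max3 (a b c : ℕ) : (b ≤ a ∧ c ≤ a) ∨ (a ≤ b ∧ c ≤ b) ∨ (a ≤ c ∧ b ≤ c) := by omega

/-- pointwise trilinear dyadic decomposition -/
lemma tri_pointwise (f : G3 → ℝ≥0∞) (n : G3) :
    ∑' p : G3 × G3, f p.1 * f p.2 * f (n - p.1 - p.2) ≤ 3 * ∑' J : ℕ, Vp f J n := by
  have key : ∀ p : G3 × G3,
      f p.1 * f p.2 * f (n - p.1 - p.2)
        ≤ (∑' J, shl f J p.1 * low f J p.2 * low f J (n - p.1 - p.2))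
          + (∑' J, low f J p.1 * shl f J p.2 * low f J (n - p.1 - p.2))
          + (∑' J, low f J p.1 * low f J p.2 * shl f J (n - p.1 - p.2)) := by
    intro p
    set m := p.1; set k := p.2; set l := n - p.1 - p.2
    rcases max3 (lev m) (lev k) (lev l) with ⟨h1, h2⟩ | ⟨h1, h2⟩ | ⟨h1, h2⟩
    · have : f m * f k * f l = shl f (lev m) m * low f (lev m) k * low f (lev m) l := by
        unfold shl low; simp [h1, h2]
      calc f m * f k * f l ≤ ∑' J, shl f J m * low f J k * low f J l :=
            this ▸ ENNReal.le_tsum (lev m)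
        _ ≤ _ := by exact le_add_right (le_add_right le_rfl)
    · have : f m * f k * f l = low f (lev k) m * shl f (lev k) k * low f (lev k) l := by
        unfold shl low; simp [h1, h2]
      calc f m * f k * f l ≤ ∑' J, low f J m * shl f J k * low f J l :=
            this ▸ ENNReal.le_tsum (lev k)
        _ ≤ _ := le_add_right (le_add_left le_rfl)
    · have : f m * f k * f l = low f (lev l) m * low f (lev l) k * shl f (lev l) l := by
        unfold shl low; simp [h1, h2]
      calc f m * f k * f l ≤ ∑' J, low f J m * low f J k * shl f J l :=
            this ▸ ENNReal.le_tsum (lev l)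
        _ ≤ _ := le_add_left le_rfl
  calc ∑' p : G3 × G3, f p.1 * f p.2 * f (n - p.1 - p.2)
      ≤ ∑' p : G3 × G3,
          ((∑' J, shl f J p.1 * low f J p.2 * low f J (n - p.1 - p.2))
          + (∑' J, low f J p.1 * shl f J p.2 * low f J (n - p.1 - p.2))
          + (∑' J, low f J p.1 * low f J p.2 * shl f J (n - p.1 - p.2))) :=
        ENNReal.tsum_le_tsum key
    _ = (∑' p : G3 × G3, ∑' J, shl f J p.1 * low f J p.2 * low f J (n - p.1 - p.2))
          + (∑' p : G3 × G3, ∑' J, low f J p.1 * shl f J p.2 * low f J (n - p.1 - p.2))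
          + (∑' p : G3 × G3, ∑' J, low f J p.1 * low f J p.2 * shl f J (n - p.1 - p.2)) := by
        rw [ENNReal.tsum_add, ENNReal.tsum_add]
    _ = (∑' J, Vp f J n) + (∑' J, Vp f J n) + (∑' J, Vp f J n) := by
        congr 1
        · congr 1
          · exact ENNReal.tsum_comm
          · rw [ENNReal.tsum_comm]
            exact tsum_congr fun J => (swap12 (shl f J) (low f J) (low f J) n).symm
        · rw [ENNReal.tsum_comm]
          exact tsum_congr fun J => (swap13 (shl f J) (low f J) (low f J) n).symm
    _ = 3 * ∑' J : ℕ, Vp f J n := by ring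

/-- norm-square triple inequality for coordinates -/
lemma nsN_triple (m k l : G3) : nsN (m + k + l) ≤ 3 * (nsN m + nsN k + nsN l) := by
  unfold nsN
  have hcoord : ∀ c : Fin 3,
      ((m+k+l) c).natAbs^2 ≤ 3 * ((m c).natAbs^2 + (k c).natAbs^2 + (l c).natAbs^2) := by
    intro c
    have key : (((m+k+l) c).natAbs:ℤ)^2
        ≤ 3 * (((m c).natAbs:ℤ)^2 + ((k c).natAbs:ℤ)^2 + ((l c).natAbs:ℤ)^2) := by
      rw [← Int.abs_eq_natAbs, ← Int.abs_eq_natAbs, ← Int.abs_eq_natAbs, ← Int.abs_eq_natAbs]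
      simp only [sq_abs, Pi.add_apply]
      nlinarith [sq_nonneg (m c - k c), sq_nonneg (m c - l c), sq_nonneg (k c - l c)]
    exact_mod_cast key
  have hsum : ∑ c, ((m+k+l) c).natAbs^2
      ≤ 3 * ((∑ c, (m c).natAbs^2) + (∑ c, (k c).natAbs^2) + (∑ c, (l c).natAbs^2)) := by
    calc ∑ c, ((m+k+l) c).natAbs^2
        ≤ ∑ c : Fin 3, 3 * ((m c).natAbs^2 + (k c).natAbs^2 + (l c).natAbs^2) :=
          Finset.sum_le_sum fun c _ => hcoord c
      _ = 3 * ((∑ c, (m c).natAbs^2) + (∑ c, (k c).natAbs^2) + (∑ c, (l c).natAbs^2)) := by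
          rw [← Finset.mul_sum]
          congr 1
          rw [Finset.sum_add_distrib, Finset.sum_add_distrib]
  omega

lemma Vp_support (f : G3 → ℝ≥0∞) (J : ℕ) (n : G3) (h : 2^(J+5) ≤ nsN n) :
    Vp f J n = 0 := by
  unfold Vp
  rw [ENNReal.tsum_eq_zero]
  intro p
  by_contra hne
  have hm : shl f J p.1 ≠ 0 := fun h0 => hne (by rw [h0, zero_mul, zero_mul])
  have hk : low f J p.2 ≠ 0 := fun h0 => hne (by rw [h0, mul_zero, zero_mul])
  have hl : low f J (n - p.1 - p.2) ≠ 0 := fun h0 => hne (by rw [h0, mul_zero])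
  have h1 : lev p.1 = J := by unfold shl at hm; by_contra hc; simp [hc] at hm
  have h2 : lev p.2 ≤ J := by unfold low at hk; by_contra hc; simp [hc] at hk
  have h3 : lev (n - p.1 - p.2) ≤ J := by unfold low at hl; by_contra hc; simp [hc] at hl
  have b1 : nsN p.1 < 2^(J+1) := h1 ▸ lt_lev p.1
  have b2 : nsN p.2 < 2^(J+1) := lt_of_lt_of_le (lt_lev p.2) (Nat.pow_le_pow_right (by norm_num) (by omega))
  have b3 : nsN (n - p.1 - p.2) < 2^(J+1) :=
    lt_of_lt_of_le (lt_lev _) (Nat.pow_le_pow_right (by norm_num) (by omega))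
  have hdec : n = p.1 + p.2 + (n - p.1 - p.2) := by abel
  have := nsN_triple p.1 p.2 (n - p.1 - p.2)
  rw [← hdec] at this
  have hpow : (2:ℕ)^(J+5) = 16 * 2^(J+1) := by rw [pow_add, pow_add]; ring
  omega

lemma real_quarter_le : (2:ℝ)^(-(1:ℝ)/4) ≤ 7/8 := by
  set x : ℝ := (2:ℝ)^(-(1:ℝ)/4) with hx
  have h0 : (0:ℝ) < x := Real.rpow_pos_of_pos (by norm_num) _
  have h4 : x^(4:ℕ) = 1/2 := by
    rw [hx, ← Real.rpow_natCast ((2:ℝ)^(-(1:ℝ)/4)) 4, ← Real.rpow_mul (by norm_num)]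
    norm_num
  by_contra h
  push_neg at h
  have : ((7:ℝ)/8)^(4:ℕ) < x^(4:ℕ) := by
    apply pow_lt_pow_left₀ h (by norm_num)
    norm_num
  rw [h4] at this
  norm_num at this

lemma enn_quarter_le : ((2:ℝ≥0∞))^(-(1:ℝ)/4) ≤ 7/8 := by
  have h1 : ((2:ℝ≥0∞))^(-(1:ℝ)/4) = ENNReal.ofReal ((2:ℝ)^(-(1:ℝ)/4)) := by
    rw [← ENNReal.ofReal_rpow_of_pos (by norm_num)]
    norm_num
  rw [h1]
  calc ENNReal.ofReal ((2:ℝ)^(-(1:ℝ)/4)) ≤ ENNReal.ofReal (7/8) :=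
        ENNReal.ofReal_le_ofReal real_quarter_le
    _ = 7/8 := by
        rw [ENNReal.ofReal_div_of_pos (by norm_num)]
        norm_num

/-- the geometric series of ratio `2^(-1/4)` is at most 8 -/
lemma geo_quarter_le : ∑' d : ℕ, ((2:ℝ≥0∞))^(-(d:ℝ)/4) ≤ 8 := by
  have hterm : ∀ d : ℕ, ((2:ℝ≥0∞))^(-(d:ℝ)/4) = (((2:ℝ≥0∞))^(-(1:ℝ)/4))^d := by
    intro d
    rw [← ENNReal.rpow_natCast (((2:ℝ≥0∞))^(-(1:ℝ)/4)) d, ← ENNReal.rpow_mul]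
    congr 1
    ring
  calc ∑' d : ℕ, ((2:ℝ≥0∞))^(-(d:ℝ)/4)
      = ∑' d : ℕ, (((2:ℝ≥0∞))^(-(1:ℝ)/4))^d := tsum_congr hterm
    _ = (1 - ((2:ℝ≥0∞))^(-(1:ℝ)/4))⁻¹ := ENNReal.tsum_geometric _
    _ ≤ 8 := by
        rw [show (8:ℝ≥0∞) = ((8:ℝ≥0∞)⁻¹)⁻¹ from (inv_inv _).symm]
        rw [ENNReal.inv_le_inv]
        have h2 : (8:ℝ≥0∞)⁻¹ + ((2:ℝ≥0∞))^(-(1:ℝ)/4) ≤ 1 := by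
          calc (8:ℝ≥0∞)⁻¹ + ((2:ℝ≥0∞))^(-(1:ℝ)/4) ≤ 8⁻¹ + 7/8 :=
              add_le_add_right enn_quarter_le _
          _ = (1 + 7) * 8⁻¹ := by
              rw [div_eq_mul_inv, add_mul, one_mul]
          _ = 1 := by
              norm_num
              exact ENNReal.mul_inv_cancel (by norm_num) (by norm_num)
        have hfin : ((2:ℝ≥0∞))^(-(1:ℝ)/4) ≠ ⊤ := by
          apply ne_of_lt
          calc ((2:ℝ≥0∞))^(-(1:ℝ)/4) ≤ 7/8 := enn_quarter_le
          _ < ⊤ := ENNReal.div_lt_top (by norm_num) (by norm_num)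
        exact ENNReal.le_sub_of_add_le_right hfin h2

/-- partial geometric sums: `∑_{i ≤ J} 2^{i/4} ≤ 8 · 2^{J/4}` -/
lemma sum_geo_le (J : ℕ) :
    ∑ i ∈ Finset.range (J+1), (2:ℝ≥0∞)^((i:ℝ)/4) ≤ 8 * (2:ℝ≥0∞)^((J:ℝ)/4) := by
  have hterm : ∀ i, i ∈ Finset.range (J+1) →
      (2:ℝ≥0∞)^((i:ℝ)/4) = (2:ℝ≥0∞)^((J:ℝ)/4) * (2:ℝ≥0∞)^(((i:ℝ)-J)/4) := by
    intro i _
    rw [← ENNReal.rpow_add _ _ (by norm_num) (by norm_num)]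
    congr 1
    ring
  rw [Finset.sum_congr rfl hterm, ← Finset.mul_sum, mul_comm]
  gcongr
  have hreflect : ∑ i ∈ Finset.range (J+1), (2:ℝ≥0∞)^(((i:ℝ)-J)/4)
      = ∑ j ∈ Finset.range (J+1), (2:ℝ≥0∞)^(-(j:ℝ)/4) := by
    rw [← Finset.sum_range_reflect (fun i => (2:ℝ≥0∞)^(((i:ℝ)-J)/4)) (J+1)]
    refine Finset.sum_congr rfl fun j hj => ?_
    rw [Finset.mem_range] at hj
    congr 1
    have : ((J + 1 - 1 - j : ℕ) : ℝ) = (J:ℝ) - j := by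
      have : J + 1 - 1 - j = J - j := rfl
      rw [this]
      push_cast [Nat.cast_sub (by omega : j ≤ J)]
      ring
    rw [this]
    ring
  rw [hreflect]
  calc ∑ j ∈ Finset.range (J+1), (2:ℝ≥0∞)^(-(j:ℝ)/4)
      ≤ ∑' j : ℕ, (2:ℝ≥0∞)^(-(j:ℝ)/4) := ENNReal.sum_le_tsum _
    _ ≤ 8 := geo_quarter_le

/-- tail geometric sums -/
lemma tail_geo (i : ℕ) :
    ∑' J : ℕ, (if i ≤ J then (2:ℝ≥0∞)^(-(J:ℝ)/4) else 0)
      ≤ 8 * (2:ℝ≥0∞)^(-(i:ℝ)/4) := by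
  have hinj : Function.Injective (fun d : ℕ => i + d) := fun a b h => by simpa using h
  have hsupp : Function.support (fun J : ℕ => (if i ≤ J then (2:ℝ≥0∞)^(-(J:ℝ)/4) else 0))
      ⊆ Set.range (fun d : ℕ => i + d) := by
    intro J hJ
    simp only [Function.mem_support] at hJ
    by_cases h : i ≤ J
    · exact ⟨J - i, show i + (J - i) = J by omega⟩
    · simp [h] at hJ
  rw [← hinj.tsum_eq hsupp]
  have hterm : ∀ d : ℕ, (if i ≤ i + d then (2:ℝ≥0∞)^(-((i+d:ℕ):ℝ)/4) else 0)
      = (2:ℝ≥0∞)^(-(i:ℝ)/4) * (2:ℝ≥0∞)^(-(d:ℝ)/4) := by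
    intro d
    rw [if_pos (by omega)]
    rw [← ENNReal.rpow_add _ _ (by norm_num) (by norm_num)]
    congr 1
    push_cast
    ring
  calc ∑' d : ℕ, (if i ≤ i + d then (2:ℝ≥0∞)^(-((i+d:ℕ):ℝ)/4) else 0)
      = ∑' d : ℕ, (2:ℝ≥0∞)^(-(i:ℝ)/4) * (2:ℝ≥0∞)^(-(d:ℝ)/4) := tsum_congr hterm
    _ = (2:ℝ≥0∞)^(-(i:ℝ)/4) * ∑' d : ℕ, (2:ℝ≥0∞)^(-(d:ℝ)/4) := ENNReal.tsum_mul_left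
    _ ≤ (2:ℝ≥0∞)^(-(i:ℝ)/4) * 8 := by
        gcongr
        exact geo_quarter_le
    _ = 8 * (2:ℝ≥0∞)^(-(i:ℝ)/4) := mul_comm _ _

/-! ## Assembly lemmas -/

lemma finset_cs (s : Finset ℕ) (u v : ℕ → ℝ≥0∞) :
    (∑ i ∈ s, u i * v i)^2 ≤ (∑ i ∈ s, (u i)^2) * (∑ i ∈ s, (v i)^2) := by
  have h1 : ∑ i ∈ s, u i * v i
      = ∑' i : ℕ, (if i ∈ s then u i else 0) * (if i ∈ s then v i else 0) := by
    rw [tsum_eq_sum (s := s) (fun i hi => by simp [hi])]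
    exact (Finset.sum_congr rfl fun i hi => by simp [hi]).symm
  have h2 : ∑ i ∈ s, (u i)^2 = ∑' i : ℕ, (if i ∈ s then u i else 0)^2 := by
    rw [tsum_eq_sum (s := s) (fun i hi => by simp [hi])]
    exact (Finset.sum_congr rfl fun i hi => by simp [hi]).symm
  have h3 : ∑ i ∈ s, (v i)^2 = ∑' i : ℕ, (if i ∈ s then v i else 0)^2 := by
    rw [tsum_eq_sum (s := s) (fun i hi => by simp [hi])]
    exact (Finset.sum_congr rfl fun i hi => by simp [hi]).symm
  rw [h1, h2, h3]
  exact enn_cs_sq _ _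

lemma tsum_shell_decomp (g : (Fin 3 → ℤ) → ℝ≥0∞) :
    ∑' J : ℕ, ∑' n : Fin 3 → ℤ, (if lev n = J then g n else 0) = ∑' n, g n := by
  rw [ENNReal.tsum_comm]
  refine tsum_congr fun n => ?_
  have h := tsum_eq_single (L := SummationFilter.unconditional ℕ) (f := fun J : ℕ => if lev n = J then g n else 0) (lev n)
    (fun J' hJ' => if_neg (Ne.symm hJ'))
  simpa using h

/-- weighted ℓ² bound for a shell piece -/
lemma shl_sq_le (σ : ℝ) (hσ0 : 0 ≤ σ) (f : G3 → ℝ≥0∞) (J : ℕ) :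
    ∑' n, (shl f J n)^2
      ≤ (2:ℝ≥0∞)^(-((J:ℝ)*σ)) *
        ∑' n, (if lev n = J then ((nsN n : ℝ≥0∞))^σ * (f n)^2 else 0) := by
  rw [← ENNReal.tsum_mul_left]
  refine ENNReal.tsum_le_tsum fun n => ?_
  by_cases h : lev n = J
  · have hb : ((2:ℝ≥0∞))^((J:ℝ)) ≤ (nsN n : ℝ≥0∞) := by
      have h0 : ((2^(J:ℕ) : ℕ) : ℝ≥0∞) ≤ (nsN n : ℝ≥0∞) := by
        exact_mod_cast Nat.cast_le.mpr (h ▸ lev_le n)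
      calc ((2:ℝ≥0∞))^((J:ℝ)) = ((2^(J:ℕ) : ℕ) : ℝ≥0∞) := by
            push_cast
            rw [← ENNReal.rpow_natCast]
        _ ≤ _ := h0
    have h2 : (2:ℝ≥0∞)^((J:ℝ)*σ) ≤ (nsN n : ℝ≥0∞)^σ := by
      rw [ENNReal.rpow_mul]
      exact ENNReal.rpow_le_rpow hb hσ0
    have hcancel : (2:ℝ≥0∞)^(-((J:ℝ)*σ)) * (2:ℝ≥0∞)^((J:ℝ)*σ) = 1 := by
      rw [← ENNReal.rpow_add _ _ (by norm_num) (by norm_num)]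
      norm_num
    calc (shl f J n)^2 = f n ^2 := by unfold shl; rw [if_pos h]
      _ = ((2:ℝ≥0∞)^(-((J:ℝ)*σ)) * (2:ℝ≥0∞)^((J:ℝ)*σ)) * f n ^2 := by
          rw [hcancel, one_mul]
      _ ≤ ((2:ℝ≥0∞)^(-((J:ℝ)*σ)) * (nsN n : ℝ≥0∞)^σ) * f n ^2 := by
          gcongr
      _ = (2:ℝ≥0∞)^(-((J:ℝ)*σ)) * ((nsN n : ℝ≥0∞)^σ * f n ^2) := by ring
      _ = (2:ℝ≥0∞)^(-((J:ℝ)*σ)) * (if lev n = J then (nsN n : ℝ≥0∞)^σ * f n ^2 else 0) := by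
          rw [if_pos h]
  · unfold shl
    rw [if_neg h, if_neg h]
    simp

/-- ℓ¹ bound for a shell piece -/
lemma shl_l1_le (f : G3 → ℝ≥0∞) (i : ℕ) :
    ∑' n, shl f i n
      ≤ (512:ℝ≥0∞)^((2:ℝ)⁻¹) * (2:ℝ≥0∞)^((i:ℝ)/4) *
        (∑' n, (if lev n = i then ((nsN n : ℝ≥0∞)) * (f n)^2 else 0))^((2:ℝ)⁻¹) := by
  set X := ∑' n, (if lev n = i then ((nsN n : ℝ≥0∞)) * (f n)^2 else 0) with hX
  have hcs := enn_cs (fun n : G3 => if lev n = i then (1:ℝ≥0∞) else 0) (shl f i)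
  have hL : ∑' n, shl f i n
      = ∑' n, (if lev n = i then (1:ℝ≥0∞) else 0) * shl f i n := by
    refine tsum_congr fun n => ?_
    unfold shl
    by_cases h : lev n = i <;> simp [h]
  have hchi : ∑' n, ((if lev n = i then (1:ℝ≥0∞) else 0))^2
      ≤ 512 * (2:ℝ≥0∞) ^ ((3 * i / 2 : ℝ)) := by
    refine le_trans (ENNReal.tsum_le_tsum fun n => ?_) (count_shell i)
    by_cases h : lev n = i
    · have : nsN n < 2^(i+1) := h ▸ lt_lev n
      simp [h, this]
    · simp [h]
  have hsq : ∑' n, (shl f i n)^2 ≤ (2:ℝ≥0∞)^(-((i:ℝ))) * X := by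
    have h := shl_sq_le 1 (by norm_num) f i
    rw [hX]
    have he : (2:ℝ≥0∞)^(-((i:ℝ)*1)) = (2:ℝ≥0∞)^(-(i:ℝ)) := by norm_num
    simp only [ENNReal.rpow_one, he] at h
    exact h
  calc ∑' n, shl f i n
      ≤ (∑' n, ((if lev n = i then (1:ℝ≥0∞) else 0))^2)^((2:ℝ)⁻¹)
          * (∑' n, (shl f i n)^2)^((2:ℝ)⁻¹) := hL ▸ hcs
    _ ≤ (512 * (2:ℝ≥0∞) ^ ((3 * i / 2 : ℝ)))^((2:ℝ)⁻¹)
          * ((2:ℝ≥0∞)^(-((i:ℝ))) * X)^((2:ℝ)⁻¹) := by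
        exact mul_le_mul' (ENNReal.rpow_le_rpow hchi (by norm_num))
          (ENNReal.rpow_le_rpow hsq (by norm_num))
    _ = (512:ℝ≥0∞)^((2:ℝ)⁻¹) * (2:ℝ≥0∞)^((i:ℝ)/4) * X^((2:ℝ)⁻¹) := by
        rw [ENNReal.mul_rpow_of_nonneg _ _ (by norm_num),
          ENNReal.mul_rpow_of_nonneg _ _ (by norm_num)]
        have e1 : ((2:ℝ≥0∞) ^ ((3 * i / 2 : ℝ)))^((2:ℝ)⁻¹) = (2:ℝ≥0∞)^((3 * i / 4 : ℝ)) := by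
          rw [← ENNReal.rpow_mul]
          ring_nf
        have e2 : ((2:ℝ≥0∞) ^ (-(i:ℝ)))^((2:ℝ)⁻¹) = (2:ℝ≥0∞)^(-(i:ℝ)/2) := by
          rw [← ENNReal.rpow_mul]
          ring_nf
        rw [e1, e2]
        have e3 : (2:ℝ≥0∞)^((3 * i / 4 : ℝ)) * (2:ℝ≥0∞)^(-(i:ℝ)/2) = (2:ℝ≥0∞)^((i:ℝ)/4) := by
          rw [← ENNReal.rpow_add _ _ (by norm_num) (by norm_num)]
          ring_nf
        calc (512:ℝ≥0∞)^((2:ℝ)⁻¹) * (2:ℝ≥0∞)^((3*i/4:ℝ)) * ((2:ℝ≥0∞)^(-(i:ℝ)/2) * X^((2:ℝ)⁻¹))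
            = (512:ℝ≥0∞)^((2:ℝ)⁻¹) * ((2:ℝ≥0∞)^((3*i/4:ℝ)) * (2:ℝ≥0∞)^(-(i:ℝ)/2)) * X^((2:ℝ)⁻¹) := by
              ring
          _ = _ := by rw [e3]

/-- ℓ¹ bound for the low-pass piece -/
lemma low_l1_le (f : G3 → ℝ≥0∞) (J : ℕ) :
    ∑' n, low f J n
      ≤ (512:ℝ≥0∞)^((2:ℝ)⁻¹) *
        ∑ i ∈ Finset.range (J+1), (2:ℝ≥0∞)^((i:ℝ)/4) *
          (∑' n, (if lev n = i then ((nsN n : ℝ≥0∞)) * (f n)^2 else 0))^((2:ℝ)⁻¹) := by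
  have hdecomp : ∀ n, low f J n = ∑ i ∈ Finset.range (J+1), shl f i n := by
    intro n
    unfold low shl
    rw [Finset.sum_ite_eq (Finset.range (J+1)) (lev n) (fun _ => f n)]
    simp [Finset.mem_range, Nat.lt_succ_iff]
  calc ∑' n, low f J n = ∑' n, ∑ i ∈ Finset.range (J+1), shl f i n :=
        tsum_congr hdecomp
    _ = ∑ i ∈ Finset.range (J+1), ∑' n, shl f i n :=
        Summable.tsum_finsetSum (fun i _ => ENNReal.summable)
    _ ≤ ∑ i ∈ Finset.range (J+1), (512:ℝ≥0∞)^((2:ℝ)⁻¹) * ((2:ℝ≥0∞)^((i:ℝ)/4) *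
          (∑' n, (if lev n = i then ((nsN n : ℝ≥0∞)) * (f n)^2 else 0))^((2:ℝ)⁻¹)) := by
        refine Finset.sum_le_sum fun i _ => ?_
        rw [← mul_assoc]
        exact shl_l1_le f i
    _ = _ := by
        rw [← Finset.mul_sum]

def Hif (f : G3 → ℝ≥0∞) (i : ℕ) : ℝ≥0∞ :=
  ∑' n, (if lev n = i then ((nsN n : ℝ≥0∞)) * (f n)^2 else 0)
def BJf (σ : ℝ) (f : G3 → ℝ≥0∞) (J : ℕ) : ℝ≥0∞ :=
  ∑' n, (if lev n = J then ((nsN n : ℝ≥0∞))^σ * (f n)^2 else 0)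
def Gam (f : G3 → ℝ≥0∞) (J : ℕ) : ℝ≥0∞ :=
  ∑ i ∈ Finset.range (J+1), (2:ℝ≥0∞)^((i:ℝ)/4) * (Hif f i)^((2:ℝ)⁻¹)
def EJ (f : G3 → ℝ≥0∞) (J : ℕ) : ℝ≥0∞ :=
  ∑ i ∈ Finset.range (J+1), (2:ℝ≥0∞)^((i:ℝ)/4) * Hif f i

lemma piece_bound (σ : ℝ) (hσ : 1 ≤ σ) (f : G3 → ℝ≥0∞) (J : ℕ) :
    ∑' n, ((nsN n : ℝ≥0∞))^(σ-1) * (Vp f J n)^2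
      ≤ (2:ℝ≥0∞)^((5*(σ-1):ℝ)) * (2:ℝ≥0∞)^(-(J:ℝ)) * BJf σ f J
          * ((512:ℝ≥0∞)^(2:ℕ) * (Gam f J)^4) := by
  have hσ0 : (0:ℝ) ≤ σ - 1 := by linarith
  have hweight : ∀ n, ((nsN n : ℝ≥0∞))^(σ-1) * (Vp f J n)^2
      ≤ (2:ℝ≥0∞)^((((J:ℝ))+5)*(σ-1)) * (Vp f J n)^2 := by
    intro n
    by_cases h : nsN n < 2^(J+5)
    · refine mul_le_mul_left ?_ _
      have hb : (nsN n : ℝ≥0∞) ≤ (2:ℝ≥0∞)^(((J:ℝ))+5) := by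
        calc (nsN n : ℝ≥0∞) ≤ ((2^(J+5) : ℕ) : ℝ≥0∞) := by
              exact_mod_cast Nat.cast_le.mpr h.le
          _ = (2:ℝ≥0∞)^(((J:ℝ))+5) := by
              push_cast
              rw [← ENNReal.rpow_natCast]
              congr 1
              push_cast
              ring
      calc ((nsN n : ℝ≥0∞))^(σ-1) ≤ ((2:ℝ≥0∞)^(((J:ℝ))+5))^(σ-1) :=
            ENNReal.rpow_le_rpow hb hσ0
        _ = (2:ℝ≥0∞)^((((J:ℝ))+5)*(σ-1)) := by rw [← ENNReal.rpow_mul]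
    · rw [Vp_support f J n (by omega)]
      simp
  have hyoung := young (shl f J) (low f J)
  have hshl := shl_sq_le σ (by linarith) f J
  have hlow := low_l1_le f J
  calc ∑' n, ((nsN n : ℝ≥0∞))^(σ-1) * (Vp f J n)^2
      ≤ ∑' n, (2:ℝ≥0∞)^((((J:ℝ))+5)*(σ-1)) * (Vp f J n)^2 :=
        ENNReal.tsum_le_tsum hweight
    _ = (2:ℝ≥0∞)^((((J:ℝ))+5)*(σ-1)) * ∑' n, (Vp f J n)^2 := ENNReal.tsum_mul_left
    _ ≤ (2:ℝ≥0∞)^((((J:ℝ))+5)*(σ-1)) *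
          ((∑' m, (shl f J m)^2) * (∑' k, low f J k)^4) := by
        gcongr
        exact hyoung
    _ ≤ (2:ℝ≥0∞)^((((J:ℝ))+5)*(σ-1)) *
          (((2:ℝ≥0∞)^(-((J:ℝ)*σ)) * BJf σ f J) *
            ((512:ℝ≥0∞)^((2:ℝ)⁻¹) * Gam f J)^4) := by
        gcongr
        · exact hshl
        · exact hlow
    _ = ((2:ℝ≥0∞)^((((J:ℝ))+5)*(σ-1)) * (2:ℝ≥0∞)^(-((J:ℝ)*σ))) * BJf σ f J
          * ((((512:ℝ≥0∞)^((2:ℝ)⁻¹))^4) * (Gam f J)^4) := by ring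
    _ = (2:ℝ≥0∞)^((5*(σ-1):ℝ)) * (2:ℝ≥0∞)^(-(J:ℝ)) * BJf σ f J
          * ((512:ℝ≥0∞)^(2:ℕ) * (Gam f J)^4) := by
        have ea : (2:ℝ≥0∞)^((((J:ℝ))+5)*(σ-1)) * (2:ℝ≥0∞)^(-((J:ℝ)*σ))
            = (2:ℝ≥0∞)^((5*(σ-1):ℝ)) * (2:ℝ≥0∞)^(-(J:ℝ)) := by
          rw [← ENNReal.rpow_add _ _ (by norm_num) (by norm_num),
            ← ENNReal.rpow_add _ _ (by norm_num) (by norm_num)]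
          congr 1
          ring
        have eb : (((512:ℝ≥0∞)^((2:ℝ)⁻¹))^4 : ℝ≥0∞) = (512:ℝ≥0∞)^(2:ℕ) := by
          rw [← ENNReal.rpow_natCast ((512:ℝ≥0∞)^((2:ℝ)⁻¹)) 4, ← ENNReal.rpow_mul,
            ← ENNReal.rpow_natCast (512:ℝ≥0∞) 2]
          congr 1
          norm_num
        rw [ea, eb]

lemma gam_sq_le (f : G3 → ℝ≥0∞) (J : ℕ) :
    (Gam f J)^2 ≤ 8 * (2:ℝ≥0∞)^((J:ℝ)/4) * EJ f J := by
  have hcs := finset_cs (Finset.range (J+1))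
    (fun i => (2:ℝ≥0∞)^((i:ℝ)/8))
    (fun i => (2:ℝ≥0∞)^((i:ℝ)/8) * (Hif f i)^((2:ℝ)⁻¹))
  have huv : ∀ i : ℕ, (2:ℝ≥0∞)^((i:ℝ)/8) * ((2:ℝ≥0∞)^((i:ℝ)/8) * (Hif f i)^((2:ℝ)⁻¹))
      = (2:ℝ≥0∞)^((i:ℝ)/4) * (Hif f i)^((2:ℝ)⁻¹) := by
    intro i
    rw [← mul_assoc, ← ENNReal.rpow_add _ _ (by norm_num) (by norm_num)]
    congr 2
    ring
  have hu2 : ∀ i : ℕ, ((2:ℝ≥0∞)^((i:ℝ)/8))^2 = (2:ℝ≥0∞)^((i:ℝ)/4) := by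
    intro i
    rw [← ENNReal.rpow_natCast ((2:ℝ≥0∞)^((i:ℝ)/8)) 2, ← ENNReal.rpow_mul]
    congr 1
    push_cast
    ring
  have hv2 : ∀ i : ℕ, ((2:ℝ≥0∞)^((i:ℝ)/8) * (Hif f i)^((2:ℝ)⁻¹))^2
      = (2:ℝ≥0∞)^((i:ℝ)/4) * Hif f i := by
    intro i
    rw [mul_pow, hu2, enn_sq_sqrt]
  calc (Gam f J)^2
      = (∑ i ∈ Finset.range (J+1),
          (2:ℝ≥0∞)^((i:ℝ)/8) * ((2:ℝ≥0∞)^((i:ℝ)/8) * (Hif f i)^((2:ℝ)⁻¹)))^2 := by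
        unfold Gam
        congr 1
        exact Finset.sum_congr rfl fun i _ => (huv i).symm
    _ ≤ (∑ i ∈ Finset.range (J+1), ((2:ℝ≥0∞)^((i:ℝ)/8))^2)
          * (∑ i ∈ Finset.range (J+1), ((2:ℝ≥0∞)^((i:ℝ)/8) * (Hif f i)^((2:ℝ)⁻¹))^2) := hcs
    _ = (∑ i ∈ Finset.range (J+1), (2:ℝ≥0∞)^((i:ℝ)/4)) * EJ f J := by
        congr 1
        · exact Finset.sum_congr rfl fun i _ => hu2 i
        · exact Finset.sum_congr rfl fun i _ => hv2 i
    _ ≤ (8 * (2:ℝ≥0∞)^((J:ℝ)/4)) * EJ f J := by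
        gcongr
        exact sum_geo_le J
    _ = 8 * (2:ℝ≥0∞)^((J:ℝ)/4) * EJ f J := by ring

lemma EJ_le (f : G3 → ℝ≥0∞) (J : ℕ) :
    EJ f J ≤ (2:ℝ≥0∞)^((J:ℝ)/4) * ∑' n, ((nsN n : ℝ≥0∞)) * (f n)^2 := by
  calc EJ f J
      ≤ ∑ i ∈ Finset.range (J+1), (2:ℝ≥0∞)^((J:ℝ)/4) * Hif f i := by
        refine Finset.sum_le_sum fun i hi => ?_
        refine mul_le_mul_left ?_ _
        apply ENNReal.rpow_le_rpow_of_exponent_le (by norm_num)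
        rw [Finset.mem_range, Nat.lt_succ_iff] at hi
        have : (i:ℝ) ≤ (J:ℝ) := by exact_mod_cast hi
        linarith
    _ = (2:ℝ≥0∞)^((J:ℝ)/4) * ∑ i ∈ Finset.range (J+1), Hif f i := by
        rw [Finset.mul_sum]
    _ ≤ (2:ℝ≥0∞)^((J:ℝ)/4) * ∑' i : ℕ, Hif f i := by
        gcongr
        exact ENNReal.sum_le_tsum _
    _ = (2:ℝ≥0∞)^((J:ℝ)/4) * ∑' n, ((nsN n : ℝ≥0∞)) * (f n)^2 := by
        congr 1
        unfold Hif
        exact tsum_shell_decomp (fun n => ((nsN n : ℝ≥0∞)) * (f n)^2)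

lemma D_bound (f : G3 → ℝ≥0∞) :
    ∑' J : ℕ, (2:ℝ≥0∞)^(-(J:ℝ)/4) * EJ f J
      ≤ 8 * ∑' n, ((nsN n : ℝ≥0∞)) * (f n)^2 := by
  have hEJ : ∀ J : ℕ, EJ f J
      = ∑' i : ℕ, (if i ≤ J then (2:ℝ≥0∞)^((i:ℝ)/4) * Hif f i else 0) := by
    intro J
    rw [tsum_eq_sum (s := Finset.range (J+1))
      (fun i hi => by rw [Finset.mem_range, Nat.lt_succ_iff] at hi; rw [if_neg hi])]
    exact (Finset.sum_congr rfl fun i hi => by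
      rw [Finset.mem_range, Nat.lt_succ_iff] at hi; rw [if_pos hi]).symm
  calc ∑' J : ℕ, (2:ℝ≥0∞)^(-(J:ℝ)/4) * EJ f J
      = ∑' J : ℕ, ∑' i : ℕ,
          (if i ≤ J then (2:ℝ≥0∞)^(-(J:ℝ)/4) else 0) * ((2:ℝ≥0∞)^((i:ℝ)/4) * Hif f i) := by
        refine tsum_congr fun J => ?_
        rw [hEJ J, ← ENNReal.tsum_mul_left]
        refine tsum_congr fun i => ?_
        by_cases h : i ≤ J <;> simp [h]
    _ = ∑' i : ℕ, (∑' J : ℕ, (if i ≤ J then (2:ℝ≥0∞)^(-(J:ℝ)/4) else 0))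
          * ((2:ℝ≥0∞)^((i:ℝ)/4) * Hif f i) := by
        rw [ENNReal.tsum_comm]
        exact tsum_congr fun i => ENNReal.tsum_mul_right
    _ ≤ ∑' i : ℕ, (8 * (2:ℝ≥0∞)^(-(i:ℝ)/4)) * ((2:ℝ≥0∞)^((i:ℝ)/4) * Hif f i) := by
        refine ENNReal.tsum_le_tsum fun i => mul_le_mul_left (tail_geo i) _
    _ = ∑' i : ℕ, 8 * Hif f i := by
        refine tsum_congr fun i => ?_
        have : (2:ℝ≥0∞)^(-(i:ℝ)/4) * (2:ℝ≥0∞)^((i:ℝ)/4) = 1 := by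
          rw [← ENNReal.rpow_add _ _ (by norm_num) (by norm_num),
            show (-(i:ℝ)/4 + (i:ℝ)/4 : ℝ) = 0 by ring, ENNReal.rpow_zero]
        calc (8 * (2:ℝ≥0∞)^(-(i:ℝ)/4)) * ((2:ℝ≥0∞)^((i:ℝ)/4) * Hif f i)
            = 8 * (((2:ℝ≥0∞)^(-(i:ℝ)/4) * (2:ℝ≥0∞)^((i:ℝ)/4)) * Hif f i) := by ring
          _ = 8 * Hif f i := by rw [this, one_mul]
    _ = 8 * ∑' i : ℕ, Hif f i := ENNReal.tsum_mul_left
    _ = 8 * ∑' n, ((nsN n : ℝ≥0∞)) * (f n)^2 := by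
        congr 1
        unfold Hif
        exact tsum_shell_decomp (fun n => ((nsN n : ℝ≥0∞)) * (f n)^2)


lemma main_est (σ : ℝ) (hσ : 1 ≤ σ) (f : G3 → ℝ≥0∞) :
    ∑' n : G3, ((nsN n : ℝ≥0∞))^(σ-1) *
        (∑' p : G3 × G3, f p.1 * f p.2 * f (n - p.1 - p.2))^2
      ≤ (2:ℝ≥0∞)^(34:ℕ) * (2:ℝ≥0∞)^((5*(σ-1):ℝ)) *
          (∑' n, ((nsN n : ℝ≥0∞))^σ * (f n)^2) *
          (∑' n, ((nsN n : ℝ≥0∞)) * (f n)^2)^2 := by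
  set B := ∑' n, ((nsN n : ℝ≥0∞))^σ * (f n)^2 with hB
  set H := ∑' n, ((nsN n : ℝ≥0∞)) * (f n)^2 with hH
  have hw : ∀ n, (((nsN n : ℝ≥0∞))^((σ-1)/2))^2 = ((nsN n : ℝ≥0∞))^(σ-1) := by
    intro n
    rw [← ENNReal.rpow_natCast (((nsN n : ℝ≥0∞))^((σ-1)/2)) 2, ← ENNReal.rpow_mul]
    congr 1
    push_cast
    ring
  -- pointwise step
  have hpt : ∀ n : G3, ((nsN n : ℝ≥0∞))^(σ-1) *
      (∑' p : G3 × G3, f p.1 * f p.2 * f (n - p.1 - p.2))^2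
      ≤ 9 * (∑' J : ℕ, ((nsN n : ℝ≥0∞))^((σ-1)/2) * Vp f J n)^2 := by
    intro n
    calc ((nsN n : ℝ≥0∞))^(σ-1) * (∑' p : G3 × G3, f p.1 * f p.2 * f (n - p.1 - p.2))^2
        ≤ ((nsN n : ℝ≥0∞))^(σ-1) * (3 * ∑' J : ℕ, Vp f J n)^2 :=
          mul_le_mul_right (pow_le_pow_left' (tri_pointwise f n) 2) _
      _ = 9 * ((((nsN n : ℝ≥0∞))^((σ-1)/2)) * ∑' J : ℕ, Vp f J n)^2 := by
          rw [mul_pow, mul_pow, hw]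
          ring
      _ = 9 * (∑' J : ℕ, ((nsN n : ℝ≥0∞))^((σ-1)/2) * Vp f J n)^2 := by
          rw [ENNReal.tsum_mul_left]
  -- Minkowski
  have hmink := enn_minkowski (fun J (n : G3) => ((nsN n : ℝ≥0∞))^((σ-1)/2) * Vp f J n)
  -- per-piece norm bound
  set NJ : ℕ → ℝ≥0∞ :=
    fun J => (∑' n : G3, (((nsN n : ℝ≥0∞))^((σ-1)/2) * Vp f J n)^2)^((2:ℝ)⁻¹) with hNJ
  have hNJle : ∀ J : ℕ, NJ J ≤ (2:ℝ≥0∞)^((5*(σ-1)/2:ℝ)) * 512 *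
      ((2:ℝ≥0∞)^(-(J:ℝ)/2) * (BJf σ f J)^((2:ℝ)⁻¹) * (Gam f J)^2) := by
    intro J
    have hsum : ∑' n : G3, (((nsN n : ℝ≥0∞))^((σ-1)/2) * Vp f J n)^2
        = ∑' n : G3, ((nsN n : ℝ≥0∞))^(σ-1) * (Vp f J n)^2 := by
      refine tsum_congr fun n => ?_
      rw [mul_pow, hw]
    have hpb := piece_bound σ hσ f J
    calc NJ J = (∑' n : G3, ((nsN n : ℝ≥0∞))^(σ-1) * (Vp f J n)^2)^((2:ℝ)⁻¹) := by
          show (∑' n : G3, (((nsN n : ℝ≥0∞))^((σ-1)/2) * Vp f J n)^2)^((2:ℝ)⁻¹) = _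
          rw [hsum]
      _ ≤ ((2:ℝ≥0∞)^((5*(σ-1):ℝ)) * (2:ℝ≥0∞)^(-(J:ℝ)) * BJf σ f J
            * ((512:ℝ≥0∞)^(2:ℕ) * (Gam f J)^4))^((2:ℝ)⁻¹) :=
          ENNReal.rpow_le_rpow hpb (by norm_num)
      _ = (2:ℝ≥0∞)^((5*(σ-1)/2:ℝ)) * 512 *
            ((2:ℝ≥0∞)^(-(J:ℝ)/2) * (BJf σ f J)^((2:ℝ)⁻¹) * (Gam f J)^2) := by
          rw [ENNReal.mul_rpow_of_nonneg _ _ (by norm_num),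
            ENNReal.mul_rpow_of_nonneg _ _ (by norm_num),
            ENNReal.mul_rpow_of_nonneg _ _ (by norm_num),
            ENNReal.mul_rpow_of_nonneg _ _ (by norm_num)]
          have e1 : ((2:ℝ≥0∞)^((5*(σ-1):ℝ)))^((2:ℝ)⁻¹) = (2:ℝ≥0∞)^((5*(σ-1)/2:ℝ)) := by
            rw [← ENNReal.rpow_mul, div_eq_mul_inv]
          have e2 : ((2:ℝ≥0∞)^(-(J:ℝ)))^((2:ℝ)⁻¹) = (2:ℝ≥0∞)^(-(J:ℝ)/2) := by
            rw [← ENNReal.rpow_mul]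
            try ring_nf
          have e3 : (((512:ℝ≥0∞))^(2:ℕ))^((2:ℝ)⁻¹) = (512:ℝ≥0∞) := enn_sqrt_sq _
          have e4 : ((Gam f J)^4)^((2:ℝ)⁻¹) = (Gam f J)^2 := by
            rw [show (Gam f J)^4 = ((Gam f J)^2)^2 by ring]
            exact enn_sqrt_sq _
          rw [e1, e2, e3, e4]
          ring
  -- summing the pieces
  have hBsum : ∑' J : ℕ, BJf σ f J = B := by
    rw [hB]
    unfold BJf
    exact tsum_shell_decomp _
  have hsumNJ : ∑' J : ℕ, NJ J
      ≤ (2:ℝ≥0∞)^((5*(σ-1)/2:ℝ)) * 32768 * B^((2:ℝ)⁻¹) * H := by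
    have hterm : ∀ J : ℕ,
        (2:ℝ≥0∞)^(-(J:ℝ)/2) * (BJf σ f J)^((2:ℝ)⁻¹) * (Gam f J)^2
          ≤ 8 * ((BJf σ f J)^((2:ℝ)⁻¹) * ((2:ℝ≥0∞)^(-(J:ℝ)/4) * EJ f J)) := by
      intro J
      calc (2:ℝ≥0∞)^(-(J:ℝ)/2) * (BJf σ f J)^((2:ℝ)⁻¹) * (Gam f J)^2
          ≤ (2:ℝ≥0∞)^(-(J:ℝ)/2) * (BJf σ f J)^((2:ℝ)⁻¹)
              * (8 * (2:ℝ≥0∞)^((J:ℝ)/4) * EJ f J) :=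
            mul_le_mul_right (gam_sq_le f J) _
        _ = 8 * ((BJf σ f J)^((2:ℝ)⁻¹)
              * (((2:ℝ≥0∞)^(-(J:ℝ)/2) * (2:ℝ≥0∞)^((J:ℝ)/4)) * EJ f J)) := by ring
        _ = 8 * ((BJf σ f J)^((2:ℝ)⁻¹) * ((2:ℝ≥0∞)^(-(J:ℝ)/4) * EJ f J)) := by
            rw [← ENNReal.rpow_add _ _ (by norm_num) (by norm_num),
              show (-(J:ℝ)/2 + (J:ℝ)/4 : ℝ) = -(J:ℝ)/4 by ring]
    have hcs := enn_cs (fun J : ℕ => (BJf σ f J)^((2:ℝ)⁻¹))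
      (fun J : ℕ => (2:ℝ≥0∞)^(-(J:ℝ)/4) * EJ f J)
    have hsq2 : ∑' J : ℕ, ((2:ℝ≥0∞)^(-(J:ℝ)/4) * EJ f J)^2 ≤ 8 * H^2 := by
      have hptw : ∀ J : ℕ, ((2:ℝ≥0∞)^(-(J:ℝ)/4) * EJ f J)^2
          ≤ H * ((2:ℝ≥0∞)^(-(J:ℝ)/4) * EJ f J) := by
        intro J
        have hEJle := EJ_le f J
        rw [← hH] at hEJle
        calc ((2:ℝ≥0∞)^(-(J:ℝ)/4) * EJ f J)^2
            = ((2:ℝ≥0∞)^(-(J:ℝ)/4))^2 * (EJ f J * EJ f J) := by ring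
          _ ≤ ((2:ℝ≥0∞)^(-(J:ℝ)/4))^2 * (((2:ℝ≥0∞)^((J:ℝ)/4) * H) * EJ f J) :=
              mul_le_mul_right (mul_le_mul_left hEJle _) _
          _ = (((2:ℝ≥0∞)^(-(J:ℝ)/4) * (2:ℝ≥0∞)^((J:ℝ)/4)) * (2:ℝ≥0∞)^(-(J:ℝ)/4)) *
                H * EJ f J := by ring
          _ = H * ((2:ℝ≥0∞)^(-(J:ℝ)/4) * EJ f J) := by
              rw [← ENNReal.rpow_add _ _ (by norm_num) (by norm_num),
                show (-(J:ℝ)/4 + (J:ℝ)/4 : ℝ) = 0 by ring, ENNReal.rpow_zero, one_mul]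
              ring
      calc ∑' J : ℕ, ((2:ℝ≥0∞)^(-(J:ℝ)/4) * EJ f J)^2
          ≤ ∑' J : ℕ, H * ((2:ℝ≥0∞)^(-(J:ℝ)/4) * EJ f J) := ENNReal.tsum_le_tsum hptw
        _ = H * ∑' J : ℕ, (2:ℝ≥0∞)^(-(J:ℝ)/4) * EJ f J := ENNReal.tsum_mul_left
        _ ≤ H * (8 * H) := mul_le_mul_right (hH ▸ D_bound f) _
        _ = 8 * H^2 := by ring
    calc ∑' J : ℕ, NJ J
        ≤ ∑' J : ℕ, (2:ℝ≥0∞)^((5*(σ-1)/2:ℝ)) * 512 *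
            ((2:ℝ≥0∞)^(-(J:ℝ)/2) * (BJf σ f J)^((2:ℝ)⁻¹) * (Gam f J)^2) :=
          ENNReal.tsum_le_tsum hNJle
      _ ≤ ∑' J : ℕ, (2:ℝ≥0∞)^((5*(σ-1)/2:ℝ)) * 512 *
            (8 * ((BJf σ f J)^((2:ℝ)⁻¹) * ((2:ℝ≥0∞)^(-(J:ℝ)/4) * EJ f J))) :=
          ENNReal.tsum_le_tsum fun J => mul_le_mul_right (hterm J) _
      _ = (2:ℝ≥0∞)^((5*(σ-1)/2:ℝ)) * 4096 *
            ∑' J : ℕ, (BJf σ f J)^((2:ℝ)⁻¹) * ((2:ℝ≥0∞)^(-(J:ℝ)/4) * EJ f J) := by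
          rw [← ENNReal.tsum_mul_left]
          refine tsum_congr fun J => ?_
          ring
      _ ≤ (2:ℝ≥0∞)^((5*(σ-1)/2:ℝ)) * 4096 *
            ((∑' J : ℕ, ((BJf σ f J)^((2:ℝ)⁻¹))^2)^((2:ℝ)⁻¹) *
             (∑' J : ℕ, ((2:ℝ≥0∞)^(-(J:ℝ)/4) * EJ f J)^2)^((2:ℝ)⁻¹)) :=
          mul_le_mul_right hcs _
      _ ≤ (2:ℝ≥0∞)^((5*(σ-1)/2:ℝ)) * 4096 * (B^((2:ℝ)⁻¹) * (8 * H^2)^((2:ℝ)⁻¹)) := by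
          refine mul_le_mul_right (mul_le_mul' ?_ ?_) _
          · refine le_of_eq ?_
            have : ∑' J : ℕ, ((BJf σ f J)^((2:ℝ)⁻¹))^2 = B := by
              rw [← hBsum]
              exact tsum_congr fun J => enn_sq_sqrt _
            rw [this]
          · exact ENNReal.rpow_le_rpow hsq2 (by norm_num)
      _ ≤ (2:ℝ≥0∞)^((5*(σ-1)/2:ℝ)) * 4096 * (B^((2:ℝ)⁻¹) * (8 * H)) := by
          gcongr
          calc ((8:ℝ≥0∞) * H^2)^((2:ℝ)⁻¹)
              = (8:ℝ≥0∞)^((2:ℝ)⁻¹) * (H^2)^((2:ℝ)⁻¹) :=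
                ENNReal.mul_rpow_of_nonneg _ _ (by norm_num)
            _ = (8:ℝ≥0∞)^((2:ℝ)⁻¹) * H := by rw [enn_sqrt_sq]
            _ ≤ 8 * H := by
                refine mul_le_mul_left ?_ _
                calc (8:ℝ≥0∞)^((2:ℝ)⁻¹) ≤ (8:ℝ≥0∞)^((1:ℝ)) :=
                      ENNReal.rpow_le_rpow_of_exponent_le (by norm_num) (by norm_num)
                  _ = 8 := ENNReal.rpow_one _
      _ = (2:ℝ≥0∞)^((5*(σ-1)/2:ℝ)) * 32768 * B^((2:ℝ)⁻¹) * H := by ring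
  -- conclusion
  calc ∑' n : G3, ((nsN n : ℝ≥0∞))^(σ-1) *
        (∑' p : G3 × G3, f p.1 * f p.2 * f (n - p.1 - p.2))^2
      ≤ ∑' n : G3, 9 * (∑' J : ℕ, ((nsN n : ℝ≥0∞))^((σ-1)/2) * Vp f J n)^2 :=
        ENNReal.tsum_le_tsum hpt
    _ = 9 * ∑' n : G3, (∑' J : ℕ, ((nsN n : ℝ≥0∞))^((σ-1)/2) * Vp f J n)^2 :=
        ENNReal.tsum_mul_left
    _ ≤ 9 * (∑' J : ℕ, NJ J)^2 := mul_le_mul_right hmink _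
    _ ≤ 9 * ((2:ℝ≥0∞)^((5*(σ-1)/2:ℝ)) * 32768 * B^((2:ℝ)⁻¹) * H)^2 :=
        mul_le_mul_right (pow_le_pow_left' hsumNJ 2) _
    _ = 9 * 32768^2 * ((2:ℝ≥0∞)^((5*(σ-1)/2:ℝ)))^2 * (B^((2:ℝ)⁻¹))^2 * H^2 := by ring
    _ = 9 * 32768^2 * (2:ℝ≥0∞)^((5*(σ-1):ℝ)) * B * H^2 := by
        rw [enn_sq_sqrt]
        congr 2
        rw [← ENNReal.rpow_natCast ((2:ℝ≥0∞)^((5*(σ-1)/2:ℝ))) 2, ← ENNReal.rpow_mul]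
        congr 1
        push_cast
        ring
    _ ≤ (2:ℝ≥0∞)^(34:ℕ) * (2:ℝ≥0∞)^((5*(σ-1):ℝ)) * B * H^2 := by
        gcongr
        norm_num

/-- Nonnegative-majorant Fourier form of the trilinear estimate
`‖u³‖_{H^{σ−1}(𝕋³)} ≲ ‖u‖_{H^σ} ‖u‖²_{H¹}` for `σ ≥ 1`:
`∑ ⟨n⟩^{2(σ−1)} ((a⋆a⋆a)(n))² ≤ C (∑ ⟨n⟩^{2σ} a(n)²)(∑ ⟨n⟩² a(n)²)²`,
with `⟨n⟩² = 1 + |n|²` and all sums taken in `[0,∞]`. -/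
theorem trilinear_convolution_estimate (σ : ℝ) (hσ : 1 ≤ σ) :
    ∃ C : ℝ, 0 < C ∧ ∀ a : (Fin 3 → ℤ) → ℝ≥0,
      ∑' n : Fin 3 → ℤ,
          ENNReal.ofReal ((1 + nsqR n) ^ (σ - 1)) *
            (∑' p : (Fin 3 → ℤ) × (Fin 3 → ℤ),
              (a p.1 : ℝ≥0∞) * (a p.2 : ℝ≥0∞) * (a (n - p.1 - p.2) : ℝ≥0∞))^2
        ≤ ENNReal.ofReal C *
            (∑' n : Fin 3 → ℤ, ENNReal.ofReal ((1 + nsqR n) ^ σ) * (a n : ℝ≥0∞)^2) *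
            (∑' n : Fin 3 → ℤ, ENNReal.ofReal (1 + nsqR n) * (a n : ℝ≥0∞)^2)^2 := by
  refine ⟨2^(34:ℕ) * 2^(5*(σ-1)), by positivity, ?_⟩
  intro a
  set f : G3 → ℝ≥0∞ := fun n => (a n : ℝ≥0∞) with hf
  have hof : ENNReal.ofReal ((2:ℝ)^(34:ℕ) * (2:ℝ)^(5*(σ-1)))
      = (2:ℝ≥0∞)^(34:ℕ) * (2:ℝ≥0∞)^((5*(σ-1):ℝ)) := by
    rw [ENNReal.ofReal_mul (by positivity)]
    congr 1
    · rw [ENNReal.ofReal_pow (by norm_num)]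
      norm_num
    · rw [← ENNReal.ofReal_rpow_of_pos (by norm_num)]
      norm_num
  have hmain := main_est σ hσ f
  calc ∑' n : Fin 3 → ℤ,
          ENNReal.ofReal ((1 + nsqR n) ^ (σ - 1)) *
            (∑' p : (Fin 3 → ℤ) × (Fin 3 → ℤ),
              (a p.1 : ℝ≥0∞) * (a p.2 : ℝ≥0∞) * (a (n - p.1 - p.2) : ℝ≥0∞))^2
      = ∑' n : G3, ((nsN n : ℝ≥0∞))^(σ-1) *
          (∑' p : G3 × G3, f p.1 * f p.2 * f (n - p.1 - p.2))^2 :=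
        tsum_congr fun n => by rw [ofReal_rpow_nsqR]
    _ ≤ (2:ℝ≥0∞)^(34:ℕ) * (2:ℝ≥0∞)^((5*(σ-1):ℝ)) *
          (∑' n, ((nsN n : ℝ≥0∞))^σ * (f n)^2) *
          (∑' n, ((nsN n : ℝ≥0∞)) * (f n)^2)^2 := hmain
    _ = ENNReal.ofReal ((2:ℝ)^(34:ℕ) * (2:ℝ)^(5*(σ-1))) *
            (∑' n : Fin 3 → ℤ, ENNReal.ofReal ((1 + nsqR n) ^ σ) * (a n : ℝ≥0∞)^2) *
            (∑' n : Fin 3 → ℤ, ENNReal.ofReal (1 + nsqR n) * (a n : ℝ≥0∞)^2)^2 := by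
        rw [hof]
        congr 2
        · exact tsum_congr fun n => by rw [ofReal_rpow_nsqR]
        · exact tsum_congr fun n => by rw [ofReal_one_add_nsqR]
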